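/- Let A be a d* × d real matrix with orthonormal rows (A Aᵀ = I_{d*}), let b ∈ ℝ^{d*}, let P := I_d − Aᵀ A, and let x_1, …, x_N ∈ ℝ^d satisfy A x_i = b for every i. Let σ > 0 and define p̂(y) := (1/N) Σ_{i=1}^N (2πσ²)^{−d/2} exp(−‖y − x_i‖²/(2σ²)). Let ξ be an ℝ^d-valued random variable with E[ξ] = 0 and E[‖ξ‖²] < ∞. Then for every x ∈ ℝ^d, E[log p̂(x + ξ)] = E[log p̂(x + Pξ)] − E[‖Aξ‖²]/(2σ²). In particular, the two functions x ↦ E[log p̂(x + ξ)] and x ↦ E[log p̂(x + Pξ)] differ by a constant independent of x, so the probability measures on ℝ^d with Lebesgue densities proportional to exp(E[log p̂(x + ξ)]) and exp(E[log p̂(x + Pξ)]) coincide. -/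
import Mathlib


open MeasureTheory Real
open scoped RealInnerProductSpace

section Aux

variable {d dstar : ℕ}

lemma aux_norm_decomp (A : EuclideanSpace ℝ (Fin d) →ₗ[ℝ] EuclideanSpace ℝ (Fin dstar))
    (hA : A ∘ₗ LinearMap.adjoint A = LinearMap.id)
    (u w : EuclideanSpace ℝ (Fin d)) :
    ‖u + w‖ ^ 2 = ‖u + (w - (LinearMap.adjoint A) (A w))‖ ^ 2
      + (2 * ⟪A u, A w⟫ + ‖A w‖ ^ 2) := by
  have hAadj : ∀ v, A ((LinearMap.adjoint A) v) = v := fun v => LinearMap.congr_fun hA v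
  set q := (LinearMap.adjoint A) (A w) with hq
  have h1 : u + w = (u + (w - q)) + q := by abel
  have h2 : ⟪u + (w - q), q⟫ = ⟪A u, A w⟫ := by
    rw [hq, LinearMap.adjoint_inner_right]
    congr 1
    simp [map_add, map_sub, hAadj]
  have h3 : ‖q‖ ^ 2 = ‖A w‖ ^ 2 := by
    rw [← real_inner_self_eq_norm_sq, ← real_inner_self_eq_norm_sq, hq,
      LinearMap.adjoint_inner_right, hAadj]
  rw [h1, norm_add_sq_real, h2, h3]; ring

end Aux

set_option maxHeartbeats 1000000 in
/-- In the affine-manifold setting of Statement 2, for a centred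
square-integrable random variable `ξ`, the log-domain smoothings satisfy
`E[log p̂(x + ξ)] = E[log p̂(x + Pξ)] − E[‖Aξ‖²]/(2σ²)` for every `x`; in particular the
two functions differ by a constant, so the probability measures with Lebesgue densities
proportional to `exp(E[log p̂(x + ξ)])` and `exp(E[log p̂(x + Pξ)])` coincide. -/
theorem stmt_3 (d dstar N : ℕ) (hN : 0 < N)
    (A : EuclideanSpace ℝ (Fin d) →ₗ[ℝ] EuclideanSpace ℝ (Fin dstar))
    (hA : A ∘ₗ LinearMap.adjoint A = LinearMap.id)
    (b : EuclideanSpace ℝ (Fin dstar))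
    (x : Fin N → EuclideanSpace ℝ (Fin d)) (hx : ∀ i, A (x i) = b)
    (σ : ℝ) (hσ : 0 < σ)
    {Ω : Type*} [MeasurableSpace Ω] (μ : Measure Ω) [IsProbabilityMeasure μ]
    (ξ : Ω → EuclideanSpace ℝ (Fin d)) (hξ : Integrable ξ μ)
    (hmean : ∫ ω, ξ ω ∂μ = 0)
    (hsq : Integrable (fun ω => ‖ξ ω‖ ^ 2) μ) :
    let phat : EuclideanSpace ℝ (Fin d) → ℝ := fun y =>
      (1 / N : ℝ) * ∑ i, (2 * π * σ ^ 2) ^ (-(d : ℝ) / 2) *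
        Real.exp (-‖y - x i‖ ^ 2 / (2 * σ ^ 2))
    let P : EuclideanSpace ℝ (Fin d) →ₗ[ℝ] EuclideanSpace ℝ (Fin d) :=
      LinearMap.id - LinearMap.adjoint A ∘ₗ A
    let g₁ : EuclideanSpace ℝ (Fin d) → ℝ := fun x₀ => ∫ ω, Real.log (phat (x₀ + ξ ω)) ∂μ
    let g₂ : EuclideanSpace ℝ (Fin d) → ℝ := fun x₀ => ∫ ω, Real.log (phat (x₀ + P (ξ ω))) ∂μ
    let ν₁ : Measure (EuclideanSpace ℝ (Fin d)) :=
      volume.withDensity fun x₀ => ENNReal.ofReal (Real.exp (g₁ x₀))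
    let ν₂ : Measure (EuclideanSpace ℝ (Fin d)) :=
      volume.withDensity fun x₀ => ENNReal.ofReal (Real.exp (g₂ x₀))
    (∀ x₀, g₁ x₀ = g₂ x₀ - (∫ ω, ‖A (ξ ω)‖ ^ 2 ∂μ) / (2 * σ ^ 2)) ∧
      (ν₁ Set.univ)⁻¹ • ν₁ = (ν₂ Set.univ)⁻¹ • ν₂ := by
  intro phat P g₁ g₂ ν₁ ν₂
  haveI : Nonempty (Fin N) := ⟨⟨0, hN⟩⟩
  have hσ2 : (0:ℝ) < 2 * σ ^ 2 := by positivity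
  have hπσ : (0:ℝ) < 2 * π * σ ^ 2 := by positivity
  have hK : (0:ℝ) < (2 * π * σ ^ 2) ^ (-(d : ℝ) / 2) := Real.rpow_pos_of_pos hπσ _
  have hNR : (0:ℝ) < N := by exact_mod_cast hN
  -- positivity of phat
  have hphat_pos : ∀ y, 0 < phat y := by
    intro y
    apply mul_pos (by positivity)
    exact Finset.sum_pos (fun i _ => by positivity) Finset.univ_nonempty
  -- key pointwise identity
  have key : ∀ (x₀ v : EuclideanSpace ℝ (Fin d)),
      Real.log (phat (x₀ + v)) = Real.log (phat (x₀ + P v))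
        - (2 * ⟪A x₀ - b, A v⟫ + ‖A v‖ ^ 2) / (2 * σ ^ 2) := by
    intro x₀ v
    set c : ℝ := (2 * ⟪A x₀ - b, A v⟫ + ‖A v‖ ^ 2) / (2 * σ ^ 2) with hc
    have hterm : ∀ i : Fin N,
        Real.exp (-‖x₀ + v - x i‖ ^ 2 / (2 * σ ^ 2))
          = Real.exp (-‖x₀ + P v - x i‖ ^ 2 / (2 * σ ^ 2)) * Real.exp (-c) := by
      intro i
      rw [← Real.exp_add]
      congr 1
      have h1 : x₀ + v - x i = (x₀ - x i) + v := by abel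
      have h2 : x₀ + P v - x i = (x₀ - x i) + (v - (LinearMap.adjoint A) (A v)) := by
        simp only [P, LinearMap.sub_apply, LinearMap.id_apply, LinearMap.comp_apply]
        abel
      have hdec := aux_norm_decomp A hA (x₀ - x i) v
      have hAu : A (x₀ - x i) = A x₀ - b := by rw [map_sub, hx i]
      rw [h1, h2, hdec, hAu, hc]
      field_simp
      ring
    have hprod : phat (x₀ + v) = phat (x₀ + P v) * Real.exp (-c) := by
      calc phat (x₀ + v)
          = (1 / N : ℝ) * ∑ i, ((2 * π * σ ^ 2) ^ (-(d : ℝ) / 2) *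
              (Real.exp (-‖x₀ + P v - x i‖ ^ 2 / (2 * σ ^ 2)) * Real.exp (-c))) := by
            simp only [phat, hterm]
        _ = phat (x₀ + P v) * Real.exp (-c) := by
            simp only [phat, Finset.sum_mul, mul_assoc]
    rw [hprod, Real.log_mul (ne_of_gt (hphat_pos _)) (ne_of_gt (Real.exp_pos _)),
      Real.log_exp, hc]
    ring
  -- absolute bound on log phat
  set i₀ : Fin N := ⟨0, hN⟩ with hi₀
  have hB : ∀ y, |Real.log (phat y)| ≤ (|Real.log ((2 * π * σ ^ 2) ^ (-(d : ℝ) / 2))|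
      + Real.log N) + ‖y - x i₀‖ ^ 2 / (2 * σ ^ 2) := by
    intro y
    set K : ℝ := (2 * π * σ ^ 2) ^ (-(d : ℝ) / 2) with hKdef
    have hq : (0:ℝ) ≤ ‖y - x i₀‖ ^ 2 / (2 * σ ^ 2) := by positivity
    have hlogN : (0:ℝ) ≤ Real.log N := Real.log_nonneg (by exact_mod_cast hN)
    have hup : phat y ≤ K := by
      have hterm : ∀ i : Fin N, K * Real.exp (-‖y - x i‖ ^ 2 / (2 * σ ^ 2)) ≤ K := by
        intro i
        nth_rewrite 2 [← mul_one K]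
        apply mul_le_mul_of_nonneg_left _ hK.le
        apply Real.exp_le_one_iff.mpr
        rw [neg_div]
        exact neg_nonpos.2 (by positivity)
      calc phat y ≤ (1 / N : ℝ) * (∑ _i : Fin N, K) := by
            apply mul_le_mul_of_nonneg_left (Finset.sum_le_sum (fun i _ => hterm i))
            positivity
        _ = K := by
            rw [Finset.sum_const, Finset.card_univ, Fintype.card_fin, nsmul_eq_mul]
            field_simp
    have hlow : (1 / N : ℝ) * (K * Real.exp (-‖y - x i₀‖ ^ 2 / (2 * σ ^ 2))) ≤ phat y := by
      apply mul_le_mul_of_nonneg_left _ (by positivity)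
      calc K * Real.exp (-‖y - x i₀‖ ^ 2 / (2 * σ ^ 2))
          ≤ ∑ i, K * Real.exp (-‖y - x i‖ ^ 2 / (2 * σ ^ 2)) :=
            Finset.single_le_sum (f := fun i =>
              K * Real.exp (-‖y - x i‖ ^ 2 / (2 * σ ^ 2)))
              (fun i _ => by positivity) (Finset.mem_univ i₀)
        _ = _ := rfl
    have hlogval : Real.log ((1 / N : ℝ) * (K * Real.exp (-‖y - x i₀‖ ^ 2 / (2 * σ ^ 2))))
        = Real.log K - Real.log N - ‖y - x i₀‖ ^ 2 / (2 * σ ^ 2) := by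
      rw [Real.log_mul (by positivity) (by positivity),
        Real.log_mul (ne_of_gt hK) (Real.exp_ne_zero _), Real.log_exp, one_div,
        Real.log_inv]
      ring
    have hloglow := Real.log_le_log (by positivity) hlow
    rw [hlogval] at hloglow
    have hlogup : Real.log (phat y) ≤ Real.log K := Real.log_le_log (hphat_pos y) hup
    rw [abs_le]
    constructor
    · have := neg_abs_le (Real.log K)
      linarith
    · have := le_abs_self (Real.log K)
      linarith
  -- continuous linear versions
  set Pc : EuclideanSpace ℝ (Fin d) →L[ℝ] EuclideanSpace ℝ (Fin d) :=
    LinearMap.toContinuousLinearMap P with hPc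
  set Ac : EuclideanSpace ℝ (Fin d) →L[ℝ] EuclideanSpace ℝ (Fin dstar) :=
    LinearMap.toContinuousLinearMap A with hAc
  have hAcA : ∀ v, Ac v = A v := fun v => rfl
  have hPcP : ∀ v, Pc v = P v := fun v => rfl
  have hξm : AEStronglyMeasurable ξ μ := hξ.aestronglyMeasurable
  have hphat_cont : Continuous phat := by
    show Continuous (fun y : EuclideanSpace ℝ (Fin d) =>
      (1 / N : ℝ) * ∑ i, (2 * π * σ ^ 2) ^ (-(d : ℝ) / 2) *
        Real.exp (-‖y - x i‖ ^ 2 / (2 * σ ^ 2)))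
    apply Continuous.mul continuous_const
    apply continuous_finset_sum
    intro i _
    exact continuous_const.mul
      ((((continuous_id.sub continuous_const).norm.pow 2).neg.div_const _).rexp)
  -- integrability of ω ↦ ‖A (ξ ω)‖ ^ 2
  have hAξsq : Integrable (fun ω => ‖A (ξ ω)‖ ^ 2) μ := by
    apply Integrable.mono' (hsq.const_mul (‖Ac‖ ^ 2))
    · exact ((continuous_norm.comp Ac.continuous).pow 2).comp_aestronglyMeasurable hξm
    · filter_upwards with ω
      rw [Real.norm_eq_abs, abs_of_nonneg (by positivity), ← hAcA]
      calc ‖Ac (ξ ω)‖ ^ 2 ≤ (‖Ac‖ * ‖ξ ω‖) ^ 2 := by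
            apply pow_le_pow_left₀ (norm_nonneg _) (Ac.le_opNorm _)
        _ = ‖Ac‖ ^ 2 * ‖ξ ω‖ ^ 2 := by ring
  -- the main identity on g₁ g₂
  have hg : ∀ x₀, g₁ x₀ = g₂ x₀ - (∫ ω, ‖A (ξ ω)‖ ^ 2 ∂μ) / (2 * σ ^ 2) := by
    intro x₀
    set L : EuclideanSpace ℝ (Fin d) →L[ℝ] ℝ := (innerSL ℝ (A x₀ - b)).comp Ac with hL
    have hLv : ∀ v, L v = ⟪A x₀ - b, A v⟫ := fun v => rfl
    have hLint : Integrable (fun ω => L (ξ ω)) μ := L.integrable_comp hξ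
    have hLzero : ∫ ω, L (ξ ω) ∂μ = 0 := by
      rw [L.integral_comp_comm hξ, hmean, map_zero]
    have hfm : AEStronglyMeasurable (fun ω => Real.log (phat (x₀ + P (ξ ω)))) μ := by
      have hc : Continuous (fun v : EuclideanSpace ℝ (Fin d) =>
          Real.log (phat (x₀ + Pc v))) := by
        apply Continuous.log (hphat_cont.comp (continuous_const.add Pc.continuous))
        intro v; exact ne_of_gt (hphat_pos _)
      exact hc.comp_aestronglyMeasurable hξm
    have hfint : Integrable (fun ω => Real.log (phat (x₀ + P (ξ ω)))) μ := by
      set a : ℝ := ‖x₀ - x i₀‖ with ha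
      set B : ℝ := |Real.log ((2 * π * σ ^ 2) ^ (-(d : ℝ) / 2))| + Real.log N with hBdef
      apply Integrable.mono' ((integrable_const (B + 2 * a ^ 2 / (2 * σ ^ 2))).add
        (hsq.const_mul (2 * ‖Pc‖ ^ 2 / (2 * σ ^ 2))))
      · exact hfm
      · filter_upwards with ω
        have h1 := hB (x₀ + P (ξ ω))
        have h2 : ‖x₀ + P (ξ ω) - x i₀‖ ≤ a + ‖Pc‖ * ‖ξ ω‖ := by
          calc ‖x₀ + P (ξ ω) - x i₀‖ = ‖(x₀ - x i₀) + Pc (ξ ω)‖ := by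
                rw [hPcP]; congr 1; abel
            _ ≤ a + ‖Pc (ξ ω)‖ := norm_add_le _ _
            _ ≤ a + ‖Pc‖ * ‖ξ ω‖ := by linarith [Pc.le_opNorm (ξ ω)]
        have h3 : ‖x₀ + P (ξ ω) - x i₀‖ ^ 2 ≤ (a + ‖Pc‖ * ‖ξ ω‖) ^ 2 :=
          pow_le_pow_left₀ (norm_nonneg _) h2 2
        have h4 : (a + ‖Pc‖ * ‖ξ ω‖) ^ 2 ≤ 2 * a ^ 2 + 2 * ‖Pc‖ ^ 2 * ‖ξ ω‖ ^ 2 := by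
          nlinarith [sq_nonneg (a - ‖Pc‖ * ‖ξ ω‖)]
        have h5 : ‖x₀ + P (ξ ω) - x i₀‖ ^ 2 / (2 * σ ^ 2)
            ≤ (2 * a ^ 2 + 2 * ‖Pc‖ ^ 2 * ‖ξ ω‖ ^ 2) / (2 * σ ^ 2) := by
          exact (div_le_div_iff_of_pos_right hσ2).mpr (le_trans h3 h4)
        have heq : (2 * a ^ 2 + 2 * ‖Pc‖ ^ 2 * ‖ξ ω‖ ^ 2) / (2 * σ ^ 2)
            = 2 * a ^ 2 / (2 * σ ^ 2) + 2 * ‖Pc‖ ^ 2 / (2 * σ ^ 2) * ‖ξ ω‖ ^ 2 := by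
          rw [add_div]
          congr 1
          exact mul_div_right_comm _ _ _
        rw [heq] at h5
        simp only [Pi.add_apply, Real.norm_eq_abs]
        linarith
    have hcpart : Integrable (fun ω => (2 * L (ξ ω) + ‖A (ξ ω)‖ ^ 2) / (2 * σ ^ 2)) μ :=
      ((hLint.const_mul 2).add hAξsq).div_const _
    have hsplit : g₁ x₀ = ∫ ω, (Real.log (phat (x₀ + P (ξ ω)))
        - (2 * L (ξ ω) + ‖A (ξ ω)‖ ^ 2) / (2 * σ ^ 2)) ∂μ := by
      show (∫ ω, Real.log (phat (x₀ + ξ ω)) ∂μ) = _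
      apply integral_congr_ae
      filter_upwards with ω
      rw [key x₀ (ξ ω), hLv]
    rw [hsplit, integral_sub hfint hcpart]
    have hcint : ∫ ω, (2 * L (ξ ω) + ‖A (ξ ω)‖ ^ 2) / (2 * σ ^ 2) ∂μ
        = (∫ ω, ‖A (ξ ω)‖ ^ 2 ∂μ) / (2 * σ ^ 2) := by
      rw [integral_div, integral_add (hLint.const_mul 2) hAξsq, integral_const_mul, hLzero]
      ring_nf
    rw [hcint]
  refine ⟨hg, ?_⟩
  -- measure part
  set c : ℝ := (∫ ω, ‖A (ξ ω)‖ ^ 2 ∂μ) / (2 * σ ^ 2) with hcdef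
  set k : ENNReal := ENNReal.ofReal (Real.exp (-c)) with hkdef
  have hk0 : k ≠ 0 := by
    simp only [hkdef, ne_eq, ENNReal.ofReal_eq_zero, not_le]
    exact Real.exp_pos _
  have hktop : k ≠ ⊤ := ENNReal.ofReal_ne_top
  have hν : ν₁ = k • ν₂ := by
    show volume.withDensity (fun x₀ => ENNReal.ofReal (Real.exp (g₁ x₀)))
      = k • volume.withDensity (fun x₀ => ENNReal.ofReal (Real.exp (g₂ x₀)))
    ext s hs
    rw [Measure.smul_apply, withDensity_apply _ hs, withDensity_apply _ hs, smul_eq_mul,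
      ← lintegral_const_mul' k _ hktop]
    apply lintegral_congr
    intro y
    rw [hg y, hkdef, ← ENNReal.ofReal_mul (Real.exp_pos _).le, ← Real.exp_add]
    congr 2
    ring
  rw [hν]
  have huniv : (k • ν₂) Set.univ = k * ν₂ Set.univ := rfl
  rw [huniv, ENNReal.mul_inv (Or.inl hk0) (Or.inl hktop), smul_smul]
  congr 1
  rw [mul_comm k⁻¹, mul_assoc, ENNReal.inv_mul_cancel hk0 hktop, mul_one]
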